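/- Let v_H = 4Y⁴, v_P = −2XY³, v_E = 2X³Y + 2XY³, the tangent vectors at f = Y²(X²+Y²) to its PSL(2,R)-orbit. Then v_H is a q-null vector orthogonal to v_H, v_P, v_E, and the induced form on span{v_H, v_P, v_E}/R·v_H has signature (1,1); hence the tangent space has signature (1,1,1). -/

import Mathlib

/-- Coefficient convention: `a 0, a 1, a 2, a 3, a 4` are the coefficients of
`X⁴, X³Y, X²Y², XY³, Y⁴` respectively (so `a 0 = a₄, …, a 4 = a₀` in the paper's notation). -/
noncomputable def qq (a : Fin 5 → ℝ) : ℝ := 2 * a 0 * a 4 - (1/2) * a 3 * a 1 + (1/6) * (a 2)^2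

/-- The polarization of `qq`. -/
noncomputable def bb (f g : Fin 5 → ℝ) : ℝ := (1/2) * (qq (f + g) - qq f - qq g)

/-- Evaluation of the quartic with coefficient vector `a` at `(x, y)`. -/
noncomputable def ev (a : Fin 5 → ℝ) (x y : ℝ) : ℝ :=
  a 0 * x^4 + a 1 * x^3 * y + a 2 * x^2 * y^2 + a 3 * x * y^3 + a 4 * y^4

lemma bb_vH (x : Fin 5 → ℝ) : bb ![0,0,0,0,4] x = 4 * x 0 := by
  simp [bb, qq]
  ring

/-- For the tangent vectors `v_H = 4Y⁴`, `v_P = −2XY³`, `v_E = 2X³Y + 2XY³` at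
`f = Y²(X²+Y²)`: `v_H` is `q`-null and `B`-orthogonal to `v_H, v_P, v_E`, and the form
induced on `span{v_H, v_P, v_E}/ℝ·v_H` has signature (1,1); hence the tangent space has
signature (1,1,1). -/
theorem stmt_15 :
    let vH : Fin 5 → ℝ := ![0, 0, 0, 0, 4]
    let vP : Fin 5 → ℝ := ![0, 0, 0, -2, 0]
    let vE : Fin 5 → ℝ := ![0, 2, 0, 2, 0]
    qq vH = 0 ∧ bb vH vH = 0 ∧ bb vH vP = 0 ∧ bb vH vE = 0 ∧
    (∀ x ∈ Submodule.span ℝ {vH, vP, vE}, bb vH x = 0) ∧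
    ∃ u w : Fin 5 → ℝ,
      u ∈ Submodule.span ℝ {vH, vP, vE} ∧ w ∈ Submodule.span ℝ {vH, vP, vE} ∧
      bb u w = 0 ∧ qq u < 0 ∧ 0 < qq w ∧
      Submodule.span ℝ {vH, u, w} = Submodule.span ℝ {vH, vP, vE} ∧
      Module.finrank ℝ (Submodule.span ℝ {vH, vP, vE}) = 3 := by
  intro vH vP vE
  have hvHmem : vH ∈ Submodule.span ℝ {vH, vP, vE} :=
    Submodule.subset_span (by simp)
  have hvPmem : vP ∈ Submodule.span ℝ {vH, vP, vE} :=
    Submodule.subset_span (by simp)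
  have hvEmem : vE ∈ Submodule.span ℝ {vH, vP, vE} :=
    Submodule.subset_span (by simp)
  refine ⟨by simp [qq, vH], by rw [bb_vH]; simp [vH], by rw [bb_vH]; simp [vP],
    by rw [bb_vH]; simp [vE], ?_, vE, ![0,2,0,-2,0], hvEmem, ?_, ?_, ?_, ?_, ?_, ?_⟩
  · -- all of span is orthogonal to vH
    intro x hx
    rw [bb_vH]
    have hle : Submodule.span ℝ {vH, vP, vE} ≤
        LinearMap.ker ((LinearMap.proj 0 : (Fin 5 → ℝ) →ₗ[ℝ] ℝ)) := by
      rw [Submodule.span_le]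
      rintro y hy
      simp only [Set.mem_insert_iff, Set.mem_singleton_iff] at hy
      rcases hy with rfl | rfl | rfl <;> simp [vH, vP, vE]
    have := hle hx
    simp only [LinearMap.mem_ker, LinearMap.proj_apply] at this
    rw [this]; ring
  · -- w = 2 vP + vE ∈ span
    have : (![0,2,0,-2,0] : Fin 5 → ℝ) = (2:ℝ) • vP + vE := by
      funext i; fin_cases i <;> simp [vP, vE] <;> norm_num
    rw [this]
    exact Submodule.add_mem _ (Submodule.smul_mem _ _ hvPmem) hvEmem
  · -- bb u w = 0
    simp [bb, qq, vE]
  · simp [qq, vE]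
  · simp [qq]
  · -- span equality
    apply le_antisymm <;> rw [Submodule.span_le]
    · rintro y hy
      simp only [Set.mem_insert_iff, Set.mem_singleton_iff] at hy
      rcases hy with rfl | rfl | rfl
      · exact hvHmem
      · exact hvEmem
      · have : (![0,2,0,-2,0] : Fin 5 → ℝ) = (2:ℝ) • vP + vE := by
          funext i; fin_cases i <;> simp [vP, vE] <;> norm_num
        rw [this]
        exact Submodule.add_mem _ (Submodule.smul_mem _ _ hvPmem) hvEmem
    · rintro y hy
      simp only [Set.mem_insert_iff, Set.mem_singleton_iff] at hy
      have hH : vH ∈ Submodule.span ℝ {vH, vE, ![0,2,0,-2,0]} :=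
        Submodule.subset_span (by simp)
      have hE : vE ∈ Submodule.span ℝ {vH, vE, ![0,2,0,-2,0]} :=
        Submodule.subset_span (by simp)
      have hw : (![0,2,0,-2,0] : Fin 5 → ℝ) ∈ Submodule.span ℝ {vH, vE, ![0,2,0,-2,0]} :=
        Submodule.subset_span (by simp)
      rcases hy with rfl | rfl | rfl
      · exact hH
      · -- vP = (1/2) • (w - vE)
        have : vP = (1/2 : ℝ) • ((![0,2,0,-2,0] : Fin 5 → ℝ) - vE) := by
          funext i; fin_cases i <;> simp [vP, vE] <;> norm_num
        rw [this]
        exact Submodule.smul_mem _ _ (Submodule.sub_mem _ hw hE)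
      · exact hE
  · -- finrank = 3
    have hli : LinearIndependent ℝ ![vH, vP, vE] := by
      rw [Fintype.linearIndependent_iff]
      intro g hg
      have h4 := congrFun hg 4
      have h3 := congrFun hg 3
      have h1 := congrFun hg 1
      simp [Fin.sum_univ_three, vH, vP, vE] at h4 h3 h1
      intro i
      fin_cases i <;> simp <;> linarith
    have hr : Set.range ![vH, vP, vE] = {vH, vP, vE} := by
      ext z
      simp [Matrix.range_cons, Matrix.range_empty]
      tauto
    rw [← hr, finrank_span_eq_card hli]
    simp
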